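/- Let (ψ_k) denote the Hermite orthonormal basis of L²(ℝ) and define A_k = √((2k)!)/(2^k k!) and B_k = √((2k+1)!)/(2^k k!). Fix n ∈ ℕ and define, for m ≠ n, the vectors ψ^{(1)}_{m,n} = A_n ψ_{2m} − A_m ψ_{2n} and ψ^{(2)}_{m,n} = B_n ψ_{2m+1} − B_m ψ_{2n+1}. If φ ∈ L²(ℝ) is orthogonal to ψ^{(1)}_{m,n} and ψ^{(2)}_{m,n} for all m ≠ n, then φ = 0. -/

import Mathlib

open MeasureTheory Real
open scoped ENNReal

/-- Physicists' Hermite polynomials. -/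
noncomputable def H : ℕ → ℝ → ℝ
  | 0 => fun _ => 1
  | 1 => fun q => 2 * q
  | (n + 2) => fun q => 2 * q * H (n + 1) q - 2 * (n + 1) * H n q

/-- Normalized Hermite functions. -/
noncomputable def ψ (n : ℕ) (q : ℝ) : ℝ :=
  (Real.sqrt (2 ^ n * n.factorial * Real.sqrt Real.pi))⁻¹ * H n q * Real.exp (-q ^ 2 / 2)

noncomputable def A (k : ℕ) : ℝ := Real.sqrt ((2 * k).factorial) / (2 ^ k * k.factorial)

noncomputable def B (k : ℕ) : ℝ := Real.sqrt ((2 * k + 1).factorial) / (2 ^ k * k.factorial)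

lemma A_pos (k : ℕ) : 0 < A k :=
  div_pos (Real.sqrt_pos.mpr (by positivity)) (by positivity)

lemma B_pos (k : ℕ) : 0 < B k :=
  div_pos (Real.sqrt_pos.mpr (by positivity)) (by positivity)

lemma fact_eq (k : ℕ) : ((2 * k).factorial : ℝ) = ((2 * k).choose k : ℝ) * (k.factorial : ℝ) ^ 2 := by
  have h := Nat.choose_mul_factorial_mul_factorial (show k ≤ 2 * k by omega)
  rw [show 2 * k - k = k by omega] at h
  exact_mod_cast (by rw [← h]; ring_nf : ((2*k).factorial : ℕ) = (2 * k).choose k * k.factorial ^ 2)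

lemma A_sq (k : ℕ) : A k ^ 2 = ((2 * k).choose k : ℝ) / 4 ^ k := by
  unfold A
  rw [div_pow, Real.sq_sqrt (by positivity), fact_eq, mul_pow,
    show ((2:ℝ)^k)^2 = 4^k by
      rw [← pow_mul, show (4:ℝ) = 2^2 by norm_num, ← pow_mul, mul_comm]]
  have hne : ((k.factorial:ℝ))^2 ≠ 0 := by positivity
  field_simp

lemma B_sq (k : ℕ) : B k ^ 2 = (2 * k + 1 : ℝ) * ((2 * k).choose k : ℝ) / 4 ^ k := by
  unfold B
  rw [div_pow, Real.sq_sqrt (by positivity)]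
  rw [show ((2 * k + 1).factorial : ℝ) = (2 * k + 1) * ((2*k).factorial : ℝ) by
    exact_mod_cast congrArg (Nat.cast (R := ℝ)) (Nat.factorial_succ (2*k))]
  rw [fact_eq, mul_pow,
    show ((2:ℝ)^k)^2 = 4^k by
      rw [← pow_mul, show (4:ℝ) = 2^2 by norm_num, ← pow_mul, mul_comm]]
  have hne : ((k.factorial:ℝ))^2 ≠ 0 := by positivity
  field_simp

lemma A_sq_ge (k : ℕ) : (1 : ℝ) / (2 * k + 1) ≤ A k ^ 2 := by
  rw [A_sq]
  rw [div_le_div_iff₀ (by positivity) (by positivity)]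
  have h := Nat.four_pow_le_two_mul_add_one_mul_central_binom k
  have : (4:ℝ) ^ k ≤ (2 * k + 1) * ((2*k).choose k : ℝ) := by exact_mod_cast h
  linarith

lemma B_ge_one (k : ℕ) : (1 : ℝ) ≤ B k ^ 2 := by
  rw [B_sq]
  rw [le_div_iff₀ (by positivity)]
  have h := Nat.four_pow_le_two_mul_add_one_mul_central_binom k
  have : (4:ℝ) ^ k ≤ (2 * k + 1) * ((2*k).choose k : ℝ) := by exact_mod_cast h
  linarith

lemma not_summable_odd_inv : ¬ Summable (fun m : ℕ => (1 : ℝ) / (2 * m + 1)) := by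
  intro h
  have h2 : Summable (fun m : ℕ => (1 : ℝ) / (2 * m + 2)) := by
    refine h.of_nonneg_of_le (fun m => by positivity) (fun m => ?_)
    apply div_le_div_of_nonneg_left one_pos.le (by positivity)
    linarith
  have h3 : Summable (fun m : ℕ => (1 : ℝ) / (m + 1)) := by
    have := h2.mul_left 2
    refine this.congr fun m => ?_
    field_simp
  have h4 : Summable (fun m : ℕ => (1 : ℝ) / ((m : ℝ))) := by
    rw [← summable_nat_add_iff 1]
    refine h3.congr fun m => by push_cast; ring
  exact Real.not_summable_one_div_natCast h4

theorem orthogonal_to_basic_vectors_eq_zero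
    (hb : HilbertBasis ℕ ℝ (Lp ℝ 2 (volume : Measure ℝ)))
    (hψ : ∀ k, (hb k : ℝ → ℝ) =ᵐ[volume] ψ k)
    (n : ℕ) (φ : Lp ℝ 2 (volume : Measure ℝ))
    (h1 : ∀ m, m ≠ n → inner (𝕜 := ℝ) φ (A n • hb (2 * m) - A m • hb (2 * n)) = 0)
    (h2 : ∀ m, m ≠ n →
      inner (𝕜 := ℝ) φ (B n • hb (2 * m + 1) - B m • hb (2 * n + 1)) = 0) :
    φ = 0 := by
  set c : ℕ → ℝ := fun k => inner (𝕜 := ℝ) φ (hb k) with hc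
  -- square-summability of the coefficients
  have hsum : Summable (fun k => c k ^ 2) := by
    have h := (lp.memℓp (hb.repr φ)).summable
      (by norm_num : 0 < (2 : ℝ≥0∞).toReal)
    refine h.congr fun k => ?_
    simp only [hb.repr_apply_apply, Real.norm_eq_abs, ENNReal.toReal_ofNat,
      Real.rpow_two, sq_abs]
    rw [real_inner_comm]
  -- the linear relations among coefficients
  have heq1 : ∀ m, m ≠ n → A n * c (2 * m) = A m * c (2 * n) := by
    intro m hm
    have := h1 m hm
    rw [inner_sub_right, real_inner_smul_right, real_inner_smul_right, sub_eq_zero] at this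
    exact this
  have heq2 : ∀ m, m ≠ n → B n * c (2 * m + 1) = B m * c (2 * n + 1) := by
    intro m hm
    have := h2 m hm
    rw [inner_sub_right, real_inner_smul_right, real_inner_smul_right, sub_eq_zero] at this
    exact this
  -- even coefficients vanish
  have hceven : c (2 * n) = 0 := by
    by_contra hne
    set K : ℝ := (c (2 * n) / A n) ^ 2 with hK
    have hKpos : 0 < K := by
      rw [hK, ← sq_abs]
      exact pow_pos (abs_pos.mpr (div_ne_zero hne (A_pos n).ne')) 2
    have hall : ∀ m, A m ^ 2 * K = c (2 * m) ^ 2 := by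
      intro m
      rcases eq_or_ne m n with rfl | hm
      · rw [hK, div_pow]
        field_simp [pow_ne_zero 2 (A_pos m).ne']
        exact div_self (A_pos m).ne'
      · have h := heq1 m hm
        have hAn := (A_pos n).ne'
        have : c (2 * m) = A m * (c (2 * n) / A n) := by
          field_simp
          linarith [h]
        rw [this]
        ring
    have hsub : Summable (fun m => c (2 * m) ^ 2) :=
      hsum.comp_injective (fun a b h => by omega)
    have hsum2 : Summable (fun m : ℕ => K * (1 / (2 * m + 1) : ℝ)) := by
      refine hsub.of_nonneg_of_le (fun m => by positivity) (fun m => ?_)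
      rw [← hall m]
      have := A_sq_ge m
      nlinarith [A_sq_ge m, hKpos.le]
    have : Summable (fun m : ℕ => (1 / (2 * m + 1) : ℝ)) :=
      (summable_mul_left_iff hKpos.ne').mp hsum2
    exact not_summable_odd_inv this
  have heven : ∀ m, c (2 * m) = 0 := by
    intro m
    rcases eq_or_ne m n with rfl | hm
    · exact hceven
    · have h := heq1 m hm
      rw [hceven, mul_zero] at h
      exact (mul_eq_zero.mp h).resolve_left (A_pos n).ne'
  -- odd coefficients vanish
  have hcodd : c (2 * n + 1) = 0 := by
    by_contra hne
    set K : ℝ := (c (2 * n + 1) / B n) ^ 2 with hK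
    have hKpos : 0 < K := by
      rw [hK, ← sq_abs]
      exact pow_pos (abs_pos.mpr (div_ne_zero hne (B_pos n).ne')) 2
    have hall : ∀ m, B m ^ 2 * K = c (2 * m + 1) ^ 2 := by
      intro m
      rcases eq_or_ne m n with rfl | hm
      · rw [hK, div_pow]; field_simp [pow_ne_zero 2 (B_pos m).ne']; exact div_self (B_pos m).ne'
      · have h := heq2 m hm
        have hBn := (B_pos n).ne'
        have : c (2 * m + 1) = B m * (c (2 * n + 1) / B n) := by
          field_simp
          linarith [h]
        rw [this]; ring
    have hsub : Summable (fun m => c (2 * m + 1) ^ 2) :=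
      hsum.comp_injective (fun a b h => by omega)
    have hlim := hsub.tendsto_atTop_zero
    have hge : ∀ m, K ≤ c (2 * m + 1) ^ 2 := by
      intro m
      rw [← hall m]
      nlinarith [B_ge_one m, hKpos.le]
    have := ge_of_tendsto' hlim hge
    linarith
  have hodd : ∀ m, c (2 * m + 1) = 0 := by
    intro m
    rcases eq_or_ne m n with rfl | hm
    · exact hcodd
    · have h := heq2 m hm
      rw [hcodd, mul_zero] at h
      exact (mul_eq_zero.mp h).resolve_left (B_pos n).ne'
  -- all coefficients vanish
  have hallzero : ∀ k, c k = 0 := by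
    intro k
    rcases Nat.even_or_odd k with ⟨m, hm⟩ | ⟨m, hm⟩
    · rw [hm, ← two_mul]; exact heven m
    · rw [hm]; exact hodd m
  -- conclude
  apply hb.repr.map_eq_zero_iff.mp
  ext k
  rw [hb.repr_apply_apply, real_inner_comm]
  exact hallzero k
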